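/- arXiv:2310.13681 — 2 statements merged into one kernel-verified Lean document; each statement's English description precedes it below -/
import Mathlib

section
/- Let φ : ℝ → ℝ be twice differentiable with nondecreasing second derivative, ā ∈ ℝ a point with φ'(ā) > 0 and φ''(ā) > 0, and let c > 0, r ≥ 0, ε > 0 and m_o ≥ 0 be constants with c − r + ε > 0. Define, for m ≥ m_o, the accuracy-shaping function γ(m) := ( −φ'(ā) + √( φ'(ā)² + 2·φ''(ā)·(c − r + ε)·(m − m_o) ) ) / φ''(ā). Then for every m > m_o: φ(ā + γ(m)) − φ(ā) > (c − r)·(m − m_o). -/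
/-- **Accuracy-shaping guarantee, strictly convex case** (Theorem 5.2 of
RealFM, case `φ'' (ā) > 0`).  For a twice differentiable payoff `φ` with
nondecreasing second derivative, `φ'(ā) > 0`, `φ''(ā) > 0`, marginal cost
`c > 0`, marginal reward `r ≥ 0`, `ε > 0`, `m_o ≥ 0` and `c - r + ε > 0`, the
shaping function
`γ(m) = (-φ'(ā) + √(φ'(ā)² + 2 φ''(ā) (c - r + ε) (m - m_o))) / φ''(ā)`
satisfies `φ(ā + γ(m)) - φ(ā) > (c - r) (m - m_o)` for every `m > m_o`. -/
theorem accuracy_shaping_convex_case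
    (φ : ℝ → ℝ) (abar c r ε m_o : ℝ)
    (hφ₁ : Differentiable ℝ φ)
    (hφ₂ : Differentiable ℝ (deriv φ))
    (hφ₂mono : Monotone (deriv (deriv φ)))
    (hφ' : 0 < deriv φ abar)
    (hφ'' : 0 < deriv (deriv φ) abar)
    (hc : 0 < c) (hr : 0 ≤ r) (hε : 0 < ε) (hmo : 0 ≤ m_o)
    (hκ : 0 < c - r + ε) :
    ∀ m > m_o,
      φ (abar +
          (-deriv φ abar +
            Real.sqrt ((deriv φ abar) ^ 2 +
              2 * deriv (deriv φ) abar * (c - r + ε) * (m - m_o))) /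
            deriv (deriv φ) abar) -
        φ abar > (c - r) * (m - m_o) := by
  intro m hm
  set a := deriv φ abar with ha
  set b := deriv (deriv φ) abar with hb
  set κ := c - r + ε with hκdef
  set t := m - m_o with htdef
  have ht : 0 < t := by simp only [htdef]; linarith
  have hpos : 0 < 2 * b * κ * t := by positivity
  have hrad : 0 ≤ a ^ 2 + 2 * b * κ * t := by positivity
  set s := Real.sqrt (a ^ 2 + 2 * b * κ * t) with hsdef
  have hs2 : s ^ 2 = a ^ 2 + 2 * b * κ * t := Real.sq_sqrt hrad
  have hsa : a < s := by
    rw [hsdef]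
    refine (Real.lt_sqrt hφ'.le).2 ?_
    linarith
  set γ := (-a + s) / b with hγdef
  have hγpos : 0 < γ := div_pos (by linarith) hφ''
  -- key quadratic identity
  have hkey : a * γ + b / 2 * γ ^ 2 = κ * t := by
    have hb0 : b ≠ 0 := ne_of_gt hφ''
    have hbγ : b * γ = -a + s := by rw [hγdef]; field_simp
    have h0 : b * (a * γ + b / 2 * γ ^ 2) = b * (κ * t) := by
      linear_combination (a + (b * γ + s - a) / 2) * hbγ + (1 / 2) * hs2
    exact mul_left_cancel₀ hb0 h0
  -- φ' x - b * x is monotone on Ici abar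
  have hd1 : ∀ x, HasDerivAt (fun x => deriv φ x - b * x) (deriv (deriv φ) x - b) x := by
    intro x
    exact ((hφ₂ x).hasDerivAt.sub ((hasDerivAt_id x).const_mul b)).congr_deriv (by ring)
  have hmono1 : MonotoneOn (fun x => deriv φ x - b * x) (Set.Ici abar) := by
    apply monotoneOn_of_deriv_nonneg (convex_Ici abar)
    · exact (hφ₂.continuous.sub (continuous_const.mul continuous_id)).continuousOn
    · intro x _
      exact ((hd1 x).differentiableAt).differentiableWithinAt
    · intro x hx
      rw [(hd1 x).deriv]
      have hx' : abar ≤ x := le_of_lt (by simpa using hx)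
      have : b ≤ deriv (deriv φ) x := hφ₂mono hx'
      linarith
  -- hence deriv φ x ≥ a + b * (x - abar) on Ici abar
  have hderiv_ge : ∀ x, abar ≤ x → a + b * (x - abar) ≤ deriv φ x := by
    intro x hx
    have h := hmono1 Set.self_mem_Ici (Set.mem_Ici.2 hx) hx
    simp only at h
    linarith
  -- g x := φ x - (a*(x-abar) + b/2*(x-abar)^2) is monotone on Ici abar
  have hgderiv : ∀ x, HasDerivAt (fun x => φ x - (a * (x - abar) + b / 2 * (x - abar) ^ 2))
      (deriv φ x - (a + b * (x - abar))) x := by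
    intro x
    have h1 : HasDerivAt (fun x : ℝ => x - abar) 1 x := (hasDerivAt_id x).sub_const abar
    have hp : HasDerivAt (fun x : ℝ => (x - abar) ^ 2) (2 * (x - abar)) x := by
      exact (h1.pow 2).congr_deriv (by ring)
    have h2 : HasDerivAt (fun x => a * (x - abar) + b / 2 * (x - abar) ^ 2)
        (a * 1 + b / 2 * (2 * (x - abar))) x := (h1.const_mul a).add (hp.const_mul (b / 2))
    have h3 := (hφ₁ x).hasDerivAt.sub h2
    exact h3.congr_deriv (by ring)
  have hmono2 : MonotoneOn (fun x => φ x - (a * (x - abar) + b / 2 * (x - abar) ^ 2))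
      (Set.Ici abar) := by
    apply monotoneOn_of_deriv_nonneg (convex_Ici abar)
    · exact (hφ₁.continuous.sub (by continuity)).continuousOn
    · intro x _
      exact ((hgderiv x).differentiableAt).differentiableWithinAt
    · intro x hx
      rw [(hgderiv x).deriv]
      have hx' : abar ≤ x := le_of_lt (by simpa using hx)
      linarith [hderiv_ge x hx']
  have hmain : a * γ + b / 2 * γ ^ 2 ≤ φ (abar + γ) - φ abar := by
    have h := hmono2 Set.self_mem_Ici (Set.mem_Ici.2 (by linarith : abar ≤ abar + γ))
      (by linarith : abar ≤ abar + γ)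
    simp only [add_sub_cancel_left, sub_self, mul_zero, ne_eq, OfNat.ofNat_ne_zero,
      not_false_eq_true, zero_pow, add_zero, sub_zero] at h
    linarith [h]
  have hfin : (c - r) * t < κ * t := by nlinarith [mul_pos hε ht]
  have h1 : κ * t ≤ φ (abar + γ) - φ abar := by rw [← hkey]; exact hmain
  show φ (abar + γ) - φ abar > (c - r) * t
  exact lt_of_lt_of_le hfin h1
end

section
/- Let φ : ℝ → ℝ be convex and differentiable at a point ā with φ'(ā) > 0, and let c > 0, r ≥ 0, ε > 0 and m_o ≥ 0 be constants with c − r + ε > 0. Define, for m ≥ m_o, γ(m) := (c − r + ε)·(m − m_o) / φ'(ā). Then for every m > m_o: φ(ā + γ(m)) − φ(ā) > (c − r)·(m − m_o). -/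
/-- **Accuracy-shaping guarantee, linear case** (Theorem 5.2 of RealFM, case
`φ''(ā) = 0`).  For a convex payoff `φ` differentiable at `ā` with
`φ'(ā) > 0`, marginal cost `c > 0`, marginal reward `r ≥ 0`, `ε > 0`,
`m_o ≥ 0` and `c - r + ε > 0`, the shaping function
`γ(m) = (c - r + ε) (m - m_o) / φ'(ā)` satisfies
`φ(ā + γ(m)) - φ(ā) > (c - r) (m - m_o)` for every `m > m_o`. -/
theorem accuracy_shaping_linear_case
    (φ : ℝ → ℝ) (abar c r ε m_o : ℝ)
    (hconv : ConvexOn ℝ Set.univ φ)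
    (hdiff : DifferentiableAt ℝ φ abar)
    (hφ' : 0 < deriv φ abar)
    (hc : 0 < c) (hr : 0 ≤ r) (hε : 0 < ε) (hmo : 0 ≤ m_o)
    (hκ : 0 < c - r + ε) :
    ∀ m > m_o,
      φ (abar + (c - r + ε) * (m - m_o) / deriv φ abar) - φ abar >
        (c - r) * (m - m_o) := by
  intro m hm
  set d := deriv φ abar with hd
  have hmm : 0 < m - m_o := by linarith
  set γ : ℝ := (c - r + ε) * (m - m_o) / d with hγ
  have hγpos : 0 < γ := div_pos (mul_pos hκ hmm) hφ'
  have hlt : abar < abar + γ := by linarith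
  have hslope := hconv.deriv_le_slope (Set.mem_univ abar) (Set.mem_univ (abar + γ))
    hlt hdiff
  rw [slope_def_field] at hslope
  have hsub : abar + γ - abar = γ := by ring
  rw [hsub] at hslope
  have key : d * γ ≤ φ (abar + γ) - φ abar :=
    calc d * γ ≤ (φ (abar + γ) - φ abar) / γ * γ :=
          mul_le_mul_of_nonneg_right hslope hγpos.le
      _ = φ (abar + γ) - φ abar := div_mul_cancel₀ _ hγpos.ne'
  have hdγ : d * γ = (c - r + ε) * (m - m_o) := by
    rw [hγ, mul_div_cancel₀]
    exact hφ'.ne'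
  nlinarith
end
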